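/- In the literal-free setting, every mapping of the rule antecedent into the critical instance is dominated by a more general mapping obtained from the sandbox rewriting: for every m ∈ ⟦A⟧_{C(S,r)} there exist a conjunctive query q ∈ Q(A) and a mapping m* ∈ ⟦q⟧_{S(S)} with dom(m*) = dom(m) such that for every variable ?v, either m*(?v) = m(?v) or m*(?v) = λ. -/
import Mathlib


/-- An RDF node: a URI or a literal. -/
inductive RNode where
  | uri : ℕ → RNode
  | lit : ℕ → RNode
deriving DecidableEq

/-- A term of a triple pattern: a constant (URI or literal) or a variable. -/
inductive RTerm where
  | cst : RNode → RTerm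
  | var : ℕ → RTerm
deriving DecidableEq

abbrev Triple := RNode × RNode × RNode
abbrev TPat := RTerm × RTerm × RTerm

def RNode.isLit : RNode → Prop
  | .lit _ => True
  | .uri _ => False

def applyT (m : ℕ → RNode) : RTerm → RNode
  | .cst c => c
  | .var v => m v

def applyTriple (m : ℕ → RNode) (p : TPat) : Triple :=
  (applyT m p.1, applyT m p.2.1, applyT m p.2.2)

/-- Variable `v` occurs in triple pattern `p`. -/
def occursIn (v : ℕ) (p : TPat) : Prop :=
  p.1 = RTerm.var v ∨ p.2.1 = RTerm.var v ∨ p.2.2 = RTerm.var v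

def varsPat (P : Set TPat) : Set ℕ := { v | ∃ p ∈ P, occursIn v p }

def constIn (c : RNode) (p : TPat) : Prop :=
  p.1 = RTerm.cst c ∨ p.2.1 = RTerm.cst c ∨ p.2.2 = RTerm.cst c

def constsPat (P : Set TPat) : Set RNode := { c | ∃ p ∈ P, constIn c p }

def constsGraph (I : Set Triple) : Set RNode :=
  { c | ∃ t ∈ I, t.1 = c ∨ t.2.1 = c ∨ t.2.2 = c }

/-- `I` is an instance of the triplestore schema `⟨G, Δ⟩`: every triple of `I`
is the image of some pattern of `G` under a mapping that binds no variable of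
the no-literal set `Δ` (occurring in the pattern) to a literal. -/
def isInstance (G : Set TPat) (Δ : Set ℕ) (I : Set Triple) : Prop :=
  ∀ t ∈ I, ∃ p ∈ G, ∃ m : ℕ → RNode,
    applyTriple m p = t ∧ ∀ v ∈ Δ, occursIn v p → ¬ (m v).isLit

/-- The sandbox graph: every variable of every pattern replaced by `lam`. -/
def sandbox (G : Set TPat) (lam : RNode) : Set Triple :=
  (applyTriple (fun _ => lam)) '' G

/-- The critical instance of a schema `⟨G, Δ⟩` w.r.t. a set of constants `K`:
all triples obtained from a pattern of `G` by replacing each variable with a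
constant of `K`, which must not be a literal unless it is in the object
position and the variable there is not in `Δ`. -/
def critical (G : Set TPat) (Δ : Set ℕ) (K : Set RNode) : Set Triple :=
  { t | ∃ p ∈ G, ∃ m : ℕ → RNode, applyTriple m p = t ∧
      (∀ v, p.1 = RTerm.var v → m v ∈ K ∧ ¬ (m v).isLit) ∧
      (∀ v, p.2.1 = RTerm.var v → m v ∈ K ∧ ¬ (m v).isLit) ∧
      (∀ v, p.2.2 = RTerm.var v → m v ∈ K ∧ (v ∈ Δ → ¬ (m v).isLit)) }

/-- One position of a rewriting: kept unchanged or replaced with `lam`. -/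
def rewriteT (lam : RNode) (a b : RTerm) : Prop := b = a ∨ b = RTerm.cst lam

/-- `q` is obtained from the triple pattern `p` by replacing any subset of its
three positions with the fresh constant `lam`. -/
def rewriteTriple (lam : RNode) (p q : TPat) : Prop :=
  rewriteT lam p.1 q.1 ∧ rewriteT lam p.2.1 q.2.1 ∧ rewriteT lam p.2.2 q.2.2

/-- No literal occurs among the constants of a graph pattern. -/
def litFree (P : Set TPat) : Prop := ∀ c ∈ constsPat P, ¬ c.isLit

/-- Rewrite one position: if the schema term is a variable, use `lam`. -/
def posRW (lam : RNode) : RTerm → RTerm → RTerm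
  | .var _, _ => RTerm.cst lam
  | .cst _, a => a

def rewP (lam : RNode) (gp p : TPat) : TPat :=
  (posRW lam gp.1 p.1, posRW lam gp.2.1 p.2.1, posRW lam gp.2.2 p.2.2)

lemma posRW_rw (lam : RNode) (gt pt : RTerm) : rewriteT lam pt (posRW lam gt pt) := by
  cases gt <;> simp [posRW, rewriteT]

lemma rewP_rw (lam : RNode) (gp p : TPat) : rewriteTriple lam p (rewP lam gp p) :=
  ⟨posRW_rw lam gp.1 p.1, posRW_rw lam gp.2.1 p.2.1, posRW_rw lam gp.2.2 p.2.2⟩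

lemma posRW_apply (lam : RNode) (S : Set RNode) (m mg m' : ℕ → RNode)
    (hm' : ∀ v, m v ∈ S → m' v = m v)
    (gt pt : RTerm) (h : applyT mg gt = applyT m pt)
    (hmem : applyT (fun _ => lam) gt ∈ S) :
    applyT m' (posRW lam gt pt) = applyT (fun _ => lam) gt := by
  cases gt with
  | var w => simp [posRW, applyT]
  | cst c =>
    cases pt with
    | cst d => simpa [posRW, applyT] using h.symm
    | var v =>
      simp only [applyT] at h hmem
      have hms : m v ∈ S := h ▸ hmem
      simp [posRW, applyT, hm' v hms, ← h]

lemma key_disj (lam : RNode) (S : Set RNode) (mg : ℕ → RNode) (gt : RTerm) (c : RNode)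
    (h : applyT mg gt = c) (hmem : applyT (fun _ => lam) gt ∈ S) : c ∈ S ∨ lam ∈ S := by
  cases gt with
  | var w => exact Or.inr hmem
  | cst d => exact Or.inl (h ▸ hmem)

lemma sandbox_comp1 {G : Set TPat} (lam : RNode) {gp : TPat} (h : gp ∈ G) :
    applyT (fun _ => lam) gp.1 ∈ constsGraph (sandbox G lam) :=
  ⟨applyTriple (fun _ => lam) gp, ⟨gp, h, rfl⟩, Or.inl rfl⟩

lemma sandbox_comp2 {G : Set TPat} (lam : RNode) {gp : TPat} (h : gp ∈ G) :
    applyT (fun _ => lam) gp.2.1 ∈ constsGraph (sandbox G lam) :=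
  ⟨applyTriple (fun _ => lam) gp, ⟨gp, h, rfl⟩, Or.inr (Or.inl rfl)⟩

lemma sandbox_comp3 {G : Set TPat} (lam : RNode) {gp : TPat} (h : gp ∈ G) :
    applyT (fun _ => lam) gp.2.2 ∈ constsGraph (sandbox G lam) :=
  ⟨applyTriple (fun _ => lam) gp, ⟨gp, h, rfl⟩, Or.inr (Or.inr rfl)⟩

/-- In the literal-free setting, every mapping `m` of the
antecedent `A` into the critical instance is dominated by a more general
mapping `m*` of some rewriting `q ∈ Q(A)` into the sandbox graph: for every
variable, either `m*(?v) = m(?v)` or `m*(?v) = λ`. -/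
theorem critical_mapping_dominated (G A : Set TPat)
    (n : ℕ) (lam : RNode) (hlam : lam = RNode.uri n)
    (hG : litFree G) (hA : litFree A)
    (hfresh : lam ∉ constsPat G ∪ constsPat A)
    (huniq : ∀ v : ℕ, ∀ p₁ ∈ G, ∀ p₂ ∈ G, occursIn v p₁ → occursIn v p₂ → p₁ = p₂)
    (K : Set RNode) (hK : K = constsPat G ∪ constsPat A ∪ {lam})
    (m : ℕ → RNode)
    (hm : ∀ p ∈ A, applyTriple m p ∈ critical G (varsPat G) K)
    (hmc : ∀ v ∈ varsPat A, m v ∈ constsGraph (critical G (varsPat G) K)) :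
    ∃ (f : TPat → TPat) (m' : ℕ → RNode),
      (∀ p ∈ A, rewriteTriple lam p (f p)) ∧
      (∀ p ∈ A, applyTriple m' (f p) ∈ sandbox G lam) ∧
      (∀ v ∈ varsPat A, m' v ∈ constsGraph (sandbox G lam)) ∧
      (∀ v : ℕ, m' v = m v ∨ m' v = lam) := by
  classical
  set S := constsGraph (sandbox G lam) with hS
  -- choose, for each p ∈ A, the schema pattern and mapping witnessing criticality
  choose g hgG mg heq _h1 _h2 _h3 using hm
  set m' : ℕ → RNode := fun v => if m v ∈ S then m v else lam with hm'def
  have hm'S : ∀ v, m v ∈ S → m' v = m v := fun v hv => by simp [hm'def, hv]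
  refine ⟨fun p => if hp : p ∈ A then rewP lam (g p hp) p else p, m', ?_, ?_, ?_, ?_⟩
  · intro p hp
    simp only [dif_pos hp]
    exact rewP_rw lam (g p hp) p
  · intro p hp
    simp only [dif_pos hp]
    have h1 := congrArg (·.1) (heq p hp)
    have h2 := congrArg (·.2.1) (heq p hp)
    have h3 := congrArg (·.2.2) (heq p hp)
    simp only [applyTriple] at h1 h2 h3
    have e1 := posRW_apply lam S m (mg p hp) m' hm'S (g p hp).1 p.1 h1
      (sandbox_comp1 lam (hgG p hp))
    have e2 := posRW_apply lam S m (mg p hp) m' hm'S (g p hp).2.1 p.2.1 h2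
      (sandbox_comp2 lam (hgG p hp))
    have e3 := posRW_apply lam S m (mg p hp) m' hm'S (g p hp).2.2 p.2.2 h3
      (sandbox_comp3 lam (hgG p hp))
    have : applyTriple m' (rewP lam (g p hp) p) = applyTriple (fun _ => lam) (g p hp) := by
      simp [applyTriple, rewP, e1, e2, e3]
    rw [this]
    exact ⟨g p hp, hgG p hp, rfl⟩
  · intro v hv
    obtain ⟨p, hp, hocc⟩ := hv
    have h1 := congrArg (·.1) (heq p hp)
    have h2 := congrArg (·.2.1) (heq p hp)
    have h3 := congrArg (·.2.2) (heq p hp)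
    simp only [applyTriple] at h1 h2 h3
    have hdisj : m v ∈ S ∨ lam ∈ S := by
      rcases hocc with h | h | h
      · exact key_disj lam S (mg p hp) (g p hp).1 (m v)
          (by rw [h1, h, applyT]) (sandbox_comp1 lam (hgG p hp))
      · exact key_disj lam S (mg p hp) (g p hp).2.1 (m v)
          (by rw [h2, h, applyT]) (sandbox_comp2 lam (hgG p hp))
      · exact key_disj lam S (mg p hp) (g p hp).2.2 (m v)
          (by rw [h3, h, applyT]) (sandbox_comp3 lam (hgG p hp))
    rcases hdisj with h | h
    · rw [hm'S v h]; exact h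
    · by_cases hc : m v ∈ S
      · rw [hm'S v hc]; exact hc
      · simp [hm'def, hc]; exact h
  · intro v
    by_cases hc : m v ∈ S
    · exact Or.inl (by simp [hm'def, hc])
    · exact Or.inr (by simp [hm'def, hc])
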